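/- Let R be a finite chain ring with residue field of size q and |R| = q^r. For every n there exists C(n) > 0 such that for all subsets A, B, C of M_n(R), |A + BC| ≥ C(n) · min(q^{rn^2}, |A||B||C| / q^{2rn^2 − (n+1)/2}), where A + BC = {a + bc : a ∈ A, b ∈ B, c ∈ C}. -/

import Mathlib

open Finset IsLocalRing

section KeyIndex

variable {R : Type} [CommRing R] [Fintype R] [IsLocalRing R] [IsPrincipalIdealRing R]
  [DecidableEq R] {n : ℕ}

private lemma sum_stdBasisMatrix_diag_eq_one :
    (∑ i : Fin n, Matrix.single i i (1 : R)) = (1 : Matrix (Fin n) (Fin n) R) := by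
  ext a b
  rw [Matrix.sum_apply]
  by_cases h : a = b
  · subst h
    rw [Matrix.one_apply_eq]
    rw [Finset.sum_eq_single a (fun i _ hi => by
      simp [Matrix.single, Matrix.of_apply, hi]) (by simp)]
    simp [Matrix.single]
  · rw [Matrix.one_apply_ne h]
    refine Finset.sum_eq_zero fun i _ => ?_
    simp only [Matrix.single, Matrix.of_apply]
    exact if_neg (by rintro ⟨h1, h2⟩; exact h (h1.symm.trans h2))

private lemma key_index (K : AddSubgroup (Matrix (Fin n) (Fin n) R))
    (hK : ∀ s u : Matrix (Fin n) (Fin n) R, u ∈ K → s * u ∈ K) (hKtop : K ≠ ⊤) :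
    Nat.card K * (Nat.card (ResidueField R)) ^ n ≤ Nat.card (Matrix (Fin n) (Fin n) R) := by
  classical
  set G := Matrix (Fin n) (Fin n) R with hG
  have hKs : ∀ (a : R) (u : G), u ∈ K → a • u ∈ K := by
    intro a u hu
    have h := hK (a • (1 : G)) u hu
    rwa [Matrix.smul_mul, one_mul] at h
  obtain ⟨x, hx⟩ : ∃ x : G, x ∉ K := by
    by_contra h; push_neg at h; exact hKtop ((AddSubgroup.eq_top_iff' K).2 h)
  have hsum : ∑ i : Fin n, Matrix.single i i (1 : R) * x = x := by
    rw [← Finset.sum_mul, sum_stdBasisMatrix_diag_eq_one, one_mul]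
  obtain ⟨i, hi⟩ : ∃ i : Fin n, Matrix.single i i (1 : R) * x ∉ K := by
    by_contra h; push_neg at h
    exact hx (hsum ▸ AddSubgroup.sum_mem K (fun i _ => h i))
  set y : G := Matrix.single i i (1 : R) * x with hy
  have hEy : Matrix.single i i (1 : R) * y = y := by
    rw [hy, ← mul_assoc, Matrix.single_mul_single_same, one_mul]
  have key : ∀ v : Fin n → R,
      ((∑ l, v l • Matrix.single l i (1 : R)) * y) ∈ K → ∀ j, v j ∈ maximalIdeal R := by
    intro v hv j
    by_contra hvj
    have hunit : IsUnit (v j) := by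
      rwa [IsLocalRing.mem_maximalIdeal, mem_nonunits_iff, not_not] at hvj
    have h1 : Matrix.single i j (1 : R) *
        ((∑ l, v l • Matrix.single l i (1 : R)) * y) ∈ K := hK _ _ hv
    have h2 : Matrix.single i j (1 : R) *
        ((∑ l, v l • Matrix.single l i (1 : R)) * y) = v j • y := by
      rw [← mul_assoc, Finset.mul_sum]
      have hterm : ∀ l : Fin n, Matrix.single i j (1 : R) *
          (v l • Matrix.single l i (1 : R)) =
          if l = j then v j • Matrix.single i i (1 : R) else 0 := by
        intro l
        rw [Matrix.mul_smul]
        by_cases hl : l = j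
        · subst hl; rw [Matrix.single_mul_single_same, one_mul, if_pos rfl]
        · rw [Matrix.single_mul_single_of_ne (h := Ne.symm hl), smul_zero, if_neg hl]
      rw [Finset.sum_congr rfl (fun l _ => hterm l), Finset.sum_ite_eq' Finset.univ j
        (fun _ => v j • Matrix.single i i (1 : R)), if_pos (Finset.mem_univ j),
        Matrix.smul_mul, hEy]
    rw [h2] at h1
    obtain ⟨w, hw⟩ := hunit
    have h3 := hKs ((w⁻¹ : Rˣ) : R) _ h1
    rw [smul_smul, ← hw, Units.inv_mul, one_smul] at h3
    exact hi h3
  let Φ : (Fin n → R) →+ G := AddMonoidHom.mk'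
    (fun v => (∑ l, v l • Matrix.single l i (1 : R)) * y)
    (by
      intro v w
      simp [add_smul, Finset.sum_add_distrib, add_mul])
  let φ : (Fin n → R) →+ G ⧸ K := (QuotientAddGroup.mk' K).comp Φ
  have hker : ∀ v : Fin n → R, v ∈ φ.ker → ∀ j, v j ∈ maximalIdeal R := by
    intro v hv j
    refine key v ?_ j
    rw [AddMonoidHom.mem_ker, AddMonoidHom.comp_apply, QuotientAddGroup.mk'_apply,
      QuotientAddGroup.eq_zero_iff] at hv
    exact hv
  have hcard1 : Nat.card (Fin n → R) = Nat.card φ.range * Nat.card φ.ker := by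
    rw [AddSubgroup.card_eq_card_quotient_mul_card_addSubgroup φ.ker]
    congr 1
    exact Nat.card_congr (QuotientAddGroup.quotientKerEquivRange φ).toEquiv
  have hkerle : Nat.card φ.ker ≤ Nat.card (maximalIdeal R) ^ n := by
    have h1 : Nat.card (Fin n → (maximalIdeal R)) = Nat.card (maximalIdeal R) ^ n := by
      rw [Nat.card_pi, Finset.prod_const, Finset.card_univ, Fintype.card_fin]
    rw [← h1]
    exact Nat.card_le_card_of_injective
      (fun v : φ.ker => (fun j => ⟨v.1 j, hker v.1 v.2 j⟩ : Fin n → maximalIdeal R))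
      (by
        intro v w h
        apply Subtype.ext
        funext j
        exact congrArg Subtype.val (congrFun h j))
  have hrange_le : Nat.card φ.range ≤ Nat.card (G ⧸ K) :=
    Nat.card_le_card_of_injective (Subtype.val) Subtype.val_injective
  have hmq : Nat.card R = Nat.card (ResidueField R) * Nat.card (maximalIdeal R) := by
    rw [Submodule.card_eq_card_quotient_mul_card (maximalIdeal R), mul_comm]
    rfl
  have hm_pos : 0 < Nat.card (maximalIdeal R) := Nat.card_pos
  have hqn : Nat.card (Fin n → R) =
      Nat.card (ResidueField R) ^ n * Nat.card (maximalIdeal R) ^ n := by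
    rw [Nat.card_pi, Finset.prod_const, Finset.card_univ, Fintype.card_fin, ← mul_pow, ← hmq]
  have hranges : Nat.card (ResidueField R) ^ n ≤ Nat.card φ.range := by
    have h2 : Nat.card (maximalIdeal R) ^ n * (Nat.card (ResidueField R)) ^ n ≤
        Nat.card (maximalIdeal R) ^ n * Nat.card φ.range := by
      calc Nat.card (maximalIdeal R) ^ n * Nat.card (ResidueField R) ^ n
          = Nat.card φ.range * Nat.card φ.ker := by rw [← hcard1, hqn, mul_comm]
        _ ≤ Nat.card φ.range * Nat.card (maximalIdeal R) ^ n :=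
            Nat.mul_le_mul_left _ hkerle
        _ = Nat.card (maximalIdeal R) ^ n * Nat.card φ.range := mul_comm _ _
    exact Nat.le_of_mul_le_mul_left h2 (pow_pos hm_pos n)
  calc Nat.card K * Nat.card (ResidueField R) ^ n
      ≤ Nat.card K * Nat.card (G ⧸ K) := Nat.mul_le_mul_left _ (hranges.trans hrange_le)
    _ = Nat.card G := by
        rw [AddSubgroup.card_eq_card_quotient_mul_card_addSubgroup K, mul_comm]


variable {R : Type} [CommRing R] [Fintype R] [IsLocalRing R] [IsPrincipalIdealRing R]
  [DecidableEq R] {n : ℕ}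

private def Kgroup (χ : AddChar (Matrix (Fin n) (Fin n) R) ℂ) :
    AddSubgroup (Matrix (Fin n) (Fin n) R) where
  carrier := {u | ∀ b, χ (b * u) = 1}
  zero_mem' := by intro b; rw [mul_zero, AddChar.map_zero_eq_one]
  add_mem' := by
    intro u v hu hv b
    rw [mul_add, AddChar.map_add_eq_mul, hu b, hv b, one_mul]
  neg_mem' := by intro u hu b; rw [mul_neg, AddChar.map_neg_eq_inv, hu b, inv_one]

private lemma mem_Kgroup {χ : AddChar (Matrix (Fin n) (Fin n) R) ℂ}
    {u : Matrix (Fin n) (Fin n) R} : u ∈ Kgroup χ ↔ ∀ b, χ (b * u) = 1 := Iff.rfl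

private lemma Kgroup_mul (χ : AddChar (Matrix (Fin n) (Fin n) R) ℂ)
    (s u : Matrix (Fin n) (Fin n) R) (hu : u ∈ Kgroup χ) : s * u ∈ Kgroup χ := by
  intro b
  rw [← mul_assoc]
  exact hu (b * s)

private lemma Kgroup_ne_top {χ : AddChar (Matrix (Fin n) (Fin n) R) ℂ} (hχ : χ ≠ 0) :
    Kgroup χ ≠ ⊤ := by
  intro h
  apply hχ
  ext u
  have : u ∈ Kgroup χ := h ▸ AddSubgroup.mem_top u
  simpa using this (1 : Matrix (Fin n) (Fin n) R)

private lemma sum_char_mul_eq_card {χ : AddChar (Matrix (Fin n) (Fin n) R) ℂ}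
    {u : Matrix (Fin n) (Fin n) R} (hu : u ∈ Kgroup χ) :
    (∑ b : Matrix (Fin n) (Fin n) R, χ (b * u)) =
      (Fintype.card (Matrix (Fin n) (Fin n) R) : ℂ) := by
  have : ∀ b : Matrix (Fin n) (Fin n) R, χ (b * u) = 1 := hu
  rw [Finset.sum_congr rfl (fun b _ => this b), Finset.sum_const, Finset.card_univ,
    nsmul_eq_mul, mul_one]

private lemma sum_char_mul_eq_zero {χ : AddChar (Matrix (Fin n) (Fin n) R) ℂ}
    {u : Matrix (Fin n) (Fin n) R} (hu : u ∉ Kgroup χ) :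
    (∑ b : Matrix (Fin n) (Fin n) R, χ (b * u)) = 0 := by
  have hne : χ.compAddMonoidHom (AddMonoidHom.mulRight u) ≠ 0 := by
    intro h0
    apply hu
    intro b
    have := congrFun (congrArg (fun (ψ : AddChar _ ℂ) => (ψ : _ → ℂ)) h0) b
    simpa using this
  have h := AddChar.sum_eq_zero_iff_ne_zero.2 hne
  exact h

private lemma P_bound (B C : Finset (Matrix (Fin n) (Fin n) R))
    (χ : AddChar (Matrix (Fin n) (Fin n) R) ℂ) (hχ : χ ≠ 0) :
    ‖∑ p ∈ B ×ˢ C, χ (p.1 * p.2)‖ ^ 2 * (Nat.card (ResidueField R) : ℝ) ^ n ≤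
      (B.card : ℝ) * C.card * (Fintype.card (Matrix (Fin n) (Fin n) R) : ℝ) ^ 2 := by
  classical
  set N : ℝ := (Fintype.card (Matrix (Fin n) (Fin n) R) : ℝ) with hN
  set qR : ℝ := (Nat.card (ResidueField R) : ℝ) with hqR
  have hN0 : 0 ≤ N := by positivity
  have hq0 : (0:ℝ) ≤ qR ^ n := by positivity
  have h1 : ‖∑ p ∈ B ×ˢ C, χ (p.1 * p.2)‖ ^ 2 ≤
      (B.card : ℝ) * ∑ b ∈ B, ‖∑ c ∈ C, χ (b * c)‖ ^ 2 := by
    rw [Finset.sum_product]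
    calc ‖∑ b ∈ B, ∑ c ∈ C, χ (b * c)‖ ^ 2
        ≤ (∑ b ∈ B, ‖∑ c ∈ C, χ (b * c)‖) ^ 2 := by
          apply pow_le_pow_left₀ (norm_nonneg _) (norm_sum_le _ _)
      _ ≤ (B.card : ℝ) * ∑ b ∈ B, ‖∑ c ∈ C, χ (b * c)‖ ^ 2 := sq_sum_le_card_mul_sum_sq
  have h2 : (∑ b ∈ B, ‖∑ c ∈ C, χ (b * c)‖ ^ 2) ≤ ∑ b : Matrix (Fin n) (Fin n) R, ‖∑ c ∈ C, χ (b * c)‖ ^ 2 :=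
    Finset.sum_le_sum_of_subset_of_nonneg (Finset.subset_univ B) (fun _ _ _ => by positivity)
  have h3 : (∑ b : Matrix (Fin n) (Fin n) R, ‖∑ c ∈ C, χ (b * c)‖ ^ 2)
      = ∑ p ∈ C ×ˢ C, (if p.1 - p.2 ∈ Kgroup χ then N else 0) := by
    have hcplx : ((∑ b : Matrix (Fin n) (Fin n) R, ‖∑ c ∈ C, χ (b * c)‖ ^ 2 : ℝ) : ℂ)
        = ((∑ p ∈ C ×ˢ C, (if p.1 - p.2 ∈ Kgroup χ then N else 0) : ℝ) : ℂ) := by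
      rw [Complex.ofReal_sum, Complex.ofReal_sum]
      calc ∑ b : Matrix (Fin n) (Fin n) R, ((‖∑ c ∈ C, χ (b * c)‖ ^ 2 : ℝ) : ℂ)
          = ∑ b : Matrix (Fin n) (Fin n) R, (∑ c ∈ C, χ (b * c)) * (starRingEnd ℂ) (∑ c ∈ C, χ (b * c)) := by
            refine Finset.sum_congr rfl fun b _ => ?_
            rw [Complex.mul_conj']
            norm_cast
        _ = ∑ b : Matrix (Fin n) (Fin n) R, ∑ p ∈ C ×ˢ C, χ (b * (p.1 - p.2)) := by
            refine Finset.sum_congr rfl fun b _ => ?_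
            rw [map_sum, Finset.sum_mul_sum, ← Finset.sum_product']
            refine Finset.sum_congr rfl fun p _ => ?_
            rw [mul_sub, sub_eq_add_neg, AddChar.map_add_eq_mul, AddChar.map_neg_eq_conj]
        _ = ∑ p ∈ C ×ˢ C, ∑ b : Matrix (Fin n) (Fin n) R, χ (b * (p.1 - p.2)) := Finset.sum_comm
        _ = ∑ p ∈ C ×ˢ C, ((if p.1 - p.2 ∈ Kgroup χ then N else 0 : ℝ) : ℂ) := by
            refine Finset.sum_congr rfl fun p _ => ?_
            by_cases hp : p.1 - p.2 ∈ Kgroup χ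
            · rw [sum_char_mul_eq_card hp, if_pos hp, hN]
              norm_num
            · rw [sum_char_mul_eq_zero hp, if_neg hp]
              norm_num
    exact_mod_cast hcplx
  have hcount : (((C ×ˢ C).filter fun p => p.1 - p.2 ∈ Kgroup χ)).card
      ≤ C.card * Nat.card (Kgroup χ) := by
    have hKfin : Nat.card (Kgroup χ) = (Finset.univ.filter (· ∈ Kgroup χ)).card := by
      rw [Nat.card_eq_fintype_card]
      exact Fintype.card_subtype _
    rw [hKfin, ← Finset.card_product]
    apply Finset.card_le_card_of_injOn (fun p => (p.1, p.1 - p.2))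
    · intro p hp
      simp only [Finset.mem_coe, Finset.mem_filter, Finset.mem_product, Finset.mem_univ, true_and] at hp ⊢
      exact ⟨hp.1.1, hp.2⟩
    · intro p hp q hq h
      simp only [Prod.mk.injEq] at h
      have h1' := h.1
      have h2' := h.2
      rw [h1'] at h2'
      have : p.2 = q.2 := by
        rwa [sub_right_inj] at h2'
      exact Prod.ext h1' this
  have h4 : ∑ p ∈ C ×ˢ C, (if p.1 - p.2 ∈ Kgroup χ then N else 0)
      ≤ N * ((C.card : ℝ) * (Nat.card (Kgroup χ) : ℝ)) := by
    rw [Finset.sum_ite, Finset.sum_const, Finset.sum_const_zero, add_zero, nsmul_eq_mul]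
    calc (((C ×ˢ C).filter fun p => p.1 - p.2 ∈ Kgroup χ)).card * N
        ≤ ((C.card : ℝ) * (Nat.card (Kgroup χ) : ℝ)) * N := by
          apply mul_le_mul_of_nonneg_right _ hN0
          exact_mod_cast hcount
      _ = N * ((C.card : ℝ) * (Nat.card (Kgroup χ) : ℝ)) := mul_comm _ _
  have h5 : (Nat.card (Kgroup χ) : ℝ) * qR ^ n ≤ N := by
    have hk := key_index (Kgroup χ) (Kgroup_mul χ) (Kgroup_ne_top hχ)
    have : (Nat.card (Matrix (Fin n) (Fin n) R) : ℝ) = N := by rw [hN, Nat.card_eq_fintype_card]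
    rw [← this, hqR]
    exact_mod_cast hk
  have hfin : (∑ b : Matrix (Fin n) (Fin n) R, ‖∑ c ∈ C, χ (b * c)‖ ^ 2) * qR ^ n ≤ (C.card : ℝ) * N ^ 2 := by
    rw [h3]
    calc (∑ p ∈ C ×ˢ C, (if p.1 - p.2 ∈ Kgroup χ then N else 0)) * qR ^ n
        ≤ (N * ((C.card : ℝ) * (Nat.card (Kgroup χ) : ℝ))) * qR ^ n :=
          mul_le_mul_of_nonneg_right h4 hq0
      _ = (N * (C.card : ℝ)) * ((Nat.card (Kgroup χ) : ℝ) * qR ^ n) := by ring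
      _ ≤ (N * (C.card : ℝ)) * N := by
          apply mul_le_mul_of_nonneg_left h5
          positivity
      _ = (C.card : ℝ) * N ^ 2 := by ring
  calc ‖∑ p ∈ B ×ˢ C, χ (p.1 * p.2)‖ ^ 2 * qR ^ n
      ≤ ((B.card : ℝ) * ∑ b ∈ B, ‖∑ c ∈ C, χ (b * c)‖ ^ 2) * qR ^ n :=
        mul_le_mul_of_nonneg_right h1 hq0
    _ ≤ ((B.card : ℝ) * ∑ b : Matrix (Fin n) (Fin n) R, ‖∑ c ∈ C, χ (b * c)‖ ^ 2) * qR ^ n := by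
        apply mul_le_mul_of_nonneg_right _ hq0
        apply mul_le_mul_of_nonneg_left h2 (by positivity)
    _ = (B.card : ℝ) * ((∑ b : Matrix (Fin n) (Fin n) R, ‖∑ c ∈ C, χ (b * c)‖ ^ 2) * qR ^ n) := by ring
    _ ≤ (B.card : ℝ) * ((C.card : ℝ) * N ^ 2) := by
        apply mul_le_mul_of_nonneg_left hfin (by positivity)
    _ = (B.card : ℝ) * C.card * N ^ 2 := by ring

private lemma plancherel_count {ι : Type} [DecidableEq ι] {G : Type} [AddCommGroup G]
    [Fintype G] [DecidableEq G] (T : Finset ι) (f : ι → G) :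
    ∑ χ : AddChar G ℂ, ‖∑ p ∈ T, χ (f p)‖ ^ 2
      = (Fintype.card G : ℝ) * ((T ×ˢ T).filter fun pp => f pp.1 = f pp.2).card := by
  classical
  have hcplx : ((∑ χ : AddChar G ℂ, ‖∑ p ∈ T, χ (f p)‖ ^ 2 : ℝ) : ℂ)
      = (((Fintype.card G : ℝ) * ((T ×ˢ T).filter fun pp => f pp.1 = f pp.2).card : ℝ) : ℂ) := by
    rw [Complex.ofReal_sum]
    calc ∑ χ : AddChar G ℂ, ((‖∑ p ∈ T, χ (f p)‖ ^ 2 : ℝ) : ℂ)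
        = ∑ χ : AddChar G ℂ, (∑ p ∈ T, χ (f p)) * (starRingEnd ℂ) (∑ p ∈ T, χ (f p)) := by
          refine Finset.sum_congr rfl fun χ _ => ?_
          rw [Complex.mul_conj']
          norm_cast
      _ = ∑ χ : AddChar G ℂ, ∑ pp ∈ T ×ˢ T, χ (f pp.1 - f pp.2) := by
          refine Finset.sum_congr rfl fun χ _ => ?_
          rw [map_sum, Finset.sum_mul_sum, ← Finset.sum_product']
          refine Finset.sum_congr rfl fun pp _ => ?_
          rw [sub_eq_add_neg, AddChar.map_add_eq_mul, AddChar.map_neg_eq_conj]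
      _ = ∑ pp ∈ T ×ˢ T, ∑ χ : AddChar G ℂ, χ (f pp.1 - f pp.2) := Finset.sum_comm
      _ = ∑ pp ∈ T ×ˢ T, (if f pp.1 = f pp.2 then (Fintype.card G : ℂ) else 0) := by
          refine Finset.sum_congr rfl fun pp _ => ?_
          rw [AddChar.sum_apply_eq_ite]
          simp [sub_eq_zero]
      _ = (((Fintype.card G : ℝ) * ((T ×ˢ T).filter fun pp => f pp.1 = f pp.2).card : ℝ) : ℂ) := by
          rw [Finset.sum_ite, Finset.sum_const, Finset.sum_const_zero, add_zero, nsmul_eq_mul]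
          push_cast
          ring
  exact_mod_cast hcplx

private lemma diag_filter_card {G : Type} [DecidableEq G] (A : Finset G) :
    ((A ×ˢ A).filter fun pp => pp.1 = pp.2).card = A.card := by
  have : ((A ×ˢ A).filter fun pp => pp.1 = pp.2) = A.image (fun a => (a, a)) := by
    ext pp
    simp only [Finset.mem_filter, Finset.mem_product, Finset.mem_image, Prod.mk.injEq]
    constructor
    · rintro ⟨⟨h1, h2⟩, h3⟩
      refine ⟨pp.1, h1, ?_⟩
      obtain ⟨p1, p2⟩ := pp
      cases h3
      rfl
    · rintro ⟨a, ha, rfl⟩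
      exact ⟨⟨ha, ha⟩, rfl⟩
  rw [this, Finset.card_image_of_injective _ (fun a b h => congrArg Prod.fst h)]

private lemma energy_fiber_eq {ι G : Type} [DecidableEq ι] [DecidableEq G]
    (T : Finset ι) (f : ι → G) :
    ((T ×ˢ T).filter fun pp => f pp.1 = f pp.2).card
      = ∑ d ∈ T.image f, ((T.filter fun p => f p = d).card) ^ 2 := by
  rw [Finset.card_eq_sum_card_fiberwise (f := fun pp => f pp.1) (t := T.image f)
    (fun pp hpp => by
      rw [Finset.mem_coe, Finset.mem_filter, Finset.mem_product] at hpp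
      exact Finset.mem_image_of_mem f hpp.1.1)]
  refine Finset.sum_congr rfl fun d _ => ?_
  have hset : (((T ×ˢ T).filter fun pp => f pp.1 = f pp.2).filter fun pp => f pp.1 = d)
      = (T.filter fun p => f p = d) ×ˢ (T.filter fun p => f p = d) := by
    ext pp
    simp only [Finset.mem_filter, Finset.mem_product]
    constructor
    · rintro ⟨⟨⟨h1, h2⟩, h3⟩, h4⟩
      exact ⟨⟨h1, h4⟩, h2, h3 ▸ h4⟩
    · rintro ⟨⟨h1, h4⟩, h2, h5⟩
      exact ⟨⟨⟨h1, h2⟩, h4.trans h5.symm⟩, h4⟩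
  rw [hset, Finset.card_product, sq]

private def fmul {n : ℕ} {R : Type} [CommRing R] [Fintype R] [DecidableEq R] :
    (Matrix (Fin n) (Fin n) R × Matrix (Fin n) (Fin n) R × Matrix (Fin n) (Fin n) R)
      → Matrix (Fin n) (Fin n) R := fun p => p.1 + p.2.1 * p.2.2

private lemma energy_bound (A B C : Finset (Matrix (Fin n) (Fin n) R)) :
    (Fintype.card (Matrix (Fin n) (Fin n) R) : ℝ) *
        (((((A ×ˢ (B ×ˢ C)) ×ˢ (A ×ˢ (B ×ˢ C))).filter fun pp =>
          fmul pp.1 = fmul pp.2).card : ℝ)) *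
        (Nat.card (ResidueField R) : ℝ) ^ n
      ≤ ((A.card : ℝ) * B.card * C.card) ^ 2 * (Nat.card (ResidueField R) : ℝ) ^ n
        + (A.card : ℝ) * B.card * C.card *
          (Fintype.card (Matrix (Fin n) (Fin n) R) : ℝ) ^ 3 := by
  classical
  set qRn : ℝ := (Nat.card (ResidueField R) : ℝ) ^ n with hqRn
  have hqn0 : (0:ℝ) ≤ qRn := by positivity
  set N : ℝ := (Fintype.card (Matrix (Fin n) (Fin n) R) : ℝ) with hN
  have hN0 : (0:ℝ) ≤ N := by positivity
  have hplan := plancherel_count (A ×ˢ (B ×ˢ C)) (fmul (n := n) (R := R))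
  have hfact : ∀ χ : AddChar (Matrix (Fin n) (Fin n) R) ℂ,
      (∑ p ∈ A ×ˢ (B ×ˢ C), χ (fmul p)) =
        (∑ a ∈ A, χ a) * (∑ q ∈ B ×ˢ C, χ (q.1 * q.2)) := by
    intro χ
    rw [Finset.sum_product, Finset.sum_mul_sum]
    exact Finset.sum_congr rfl fun a _ => Finset.sum_congr rfl fun q _ =>
      AddChar.map_add_eq_mul χ a (q.1 * q.2)
  have hzero : ‖∑ p ∈ A ×ˢ (B ×ˢ C), ((0 : AddChar (Matrix (Fin n) (Fin n) R) ℂ)) (fmul p)‖ ^ 2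
      = ((A.card : ℝ) * B.card * C.card) ^ 2 := by
    simp only [AddChar.zero_apply, Finset.sum_const, nsmul_eq_mul, mul_one,
      Finset.card_product]
    rw [Complex.norm_natCast]
    push_cast
    ring
  have hpars : ∑ χ : AddChar (Matrix (Fin n) (Fin n) R) ℂ, ‖∑ a ∈ A, χ a‖ ^ 2
      = N * A.card := by
    have h := plancherel_count A (fun a => a)
    rw [h, diag_filter_card]
  have herase : (∑ χ ∈ Finset.univ.erase (0 : AddChar (Matrix (Fin n) (Fin n) R) ℂ),
        ‖∑ p ∈ A ×ˢ (B ×ˢ C), χ (fmul p)‖ ^ 2) * qRn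
      ≤ (A.card : ℝ) * B.card * C.card * N ^ 3 := by
    rw [Finset.sum_mul]
    calc ∑ χ ∈ Finset.univ.erase (0 : AddChar (Matrix (Fin n) (Fin n) R) ℂ),
          ‖∑ p ∈ A ×ˢ (B ×ˢ C), χ (fmul p)‖ ^ 2 * qRn
        ≤ ∑ χ ∈ Finset.univ.erase (0 : AddChar (Matrix (Fin n) (Fin n) R) ℂ),
            ‖∑ a ∈ A, χ a‖ ^ 2 * ((B.card : ℝ) * C.card * N ^ 2) := by
          refine Finset.sum_le_sum fun χ hχ => ?_
          have hχ0 : χ ≠ 0 := Finset.ne_of_mem_erase hχ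
          rw [hfact χ, norm_mul, mul_pow, mul_assoc]
          refine mul_le_mul_of_nonneg_left ?_ (by positivity)
          exact P_bound B C χ hχ0
      _ ≤ (∑ χ : AddChar (Matrix (Fin n) (Fin n) R) ℂ, ‖∑ a ∈ A, χ a‖ ^ 2) *
            ((B.card : ℝ) * C.card * N ^ 2) := by
          rw [← Finset.sum_mul]
          refine mul_le_mul_of_nonneg_right ?_ (by positivity)
          exact Finset.sum_le_sum_of_subset_of_nonneg
            (Finset.erase_subset _ _) (fun _ _ _ => by positivity)
      _ = (N * A.card) * ((B.card : ℝ) * C.card * N ^ 2) := by rw [hpars]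
      _ = (A.card : ℝ) * B.card * C.card * N ^ 3 := by ring
  calc N * (((((A ×ˢ (B ×ˢ C)) ×ˢ (A ×ˢ (B ×ˢ C))).filter fun pp =>
          fmul pp.1 = fmul pp.2).card : ℝ)) * qRn
      = (∑ χ : AddChar (Matrix (Fin n) (Fin n) R) ℂ,
          ‖∑ p ∈ A ×ˢ (B ×ˢ C), χ (fmul p)‖ ^ 2) * qRn := by
        rw [hplan]
    _ = (‖∑ p ∈ A ×ˢ (B ×ˢ C), ((0 : AddChar (Matrix (Fin n) (Fin n) R) ℂ)) (fmul p)‖ ^ 2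
          + ∑ χ ∈ Finset.univ.erase (0 : AddChar (Matrix (Fin n) (Fin n) R) ℂ),
              ‖∑ p ∈ A ×ˢ (B ×ˢ C), χ (fmul p)‖ ^ 2) * qRn := by
        rw [← Finset.add_sum_erase Finset.univ
          (fun χ : AddChar (Matrix (Fin n) (Fin n) R) ℂ =>
            ‖∑ p ∈ A ×ˢ (B ×ˢ C), χ (fmul p)‖ ^ 2) (Finset.mem_univ 0)]
    _ = ((A.card : ℝ) * B.card * C.card) ^ 2 * qRn
          + (∑ χ ∈ Finset.univ.erase (0 : AddChar (Matrix (Fin n) (Fin n) R) ℂ),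
              ‖∑ p ∈ A ×ˢ (B ×ˢ C), χ (fmul p)‖ ^ 2) * qRn := by
        rw [hzero]
        ring
    _ ≤ ((A.card : ℝ) * B.card * C.card) ^ 2 * qRn
          + (A.card : ℝ) * B.card * C.card * N ^ 3 := by
        exact add_le_add_right herase _

private lemma main_case {n : ℕ} (hn : 1 ≤ n) (q r : ℕ)
    (hq : q = Nat.card (IsLocalRing.ResidueField R)) (hr : Nat.card R = q ^ r)
    (A B C : Finset (Matrix (Fin n) (Fin n) R))
    (hA : A.Nonempty) (hB : B.Nonempty) (hC : C.Nonempty) :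
    ((((A ×ˢ (B ×ˢ C)).image fmul).card : ℝ))
      ≥ (1/2 : ℝ) * min ((q : ℝ) ^ (r * n ^ 2))
          ((A.card * B.card * C.card : ℝ)
            / (q : ℝ) ^ (2 * (r : ℝ) * (n : ℝ) ^ 2 - ((n : ℝ) + 1) / 2)) := by
  classical
  have hq2 : 2 ≤ q := by
    have hfinRF : Finite (ResidueField R) :=
      Finite.of_surjective _ Ideal.Quotient.mk_surjective
    letI : Fintype (ResidueField R) := Fintype.ofFinite _
    rw [hq, Nat.card_eq_fintype_card]
    exact Fintype.one_lt_card_iff_nontrivial.2 inferInstance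
  have hq0 : (0:ℝ) < (q:ℝ) := by positivity
  have hq1 : (1:ℝ) ≤ (q:ℝ) := by exact_mod_cast Nat.one_le_of_lt hq2
  -- real quantities
  set x : ℝ := (A.card : ℝ) with hx
  set y : ℝ := (B.card : ℝ) with hy
  set z : ℝ := (C.card : ℝ) with hz
  set u : ℝ := x * y * z with hu
  set N : ℝ := (Fintype.card (Matrix (Fin n) (Fin n) R) : ℝ) with hN
  set Qn : ℝ := (Nat.card (ResidueField R) : ℝ) ^ n with hQn
  set S : ℝ := (((A ×ˢ (B ×ˢ C)).image fmul).card : ℝ) with hS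
  set T : Finset (Matrix (Fin n) (Fin n) R × (Matrix (Fin n) (Fin n) R × Matrix (Fin n) (Fin n) R))
    := A ×ˢ (B ×ˢ C) with hT
  set Ep : ℕ := ((T ×ˢ T).filter fun pp => fmul pp.1 = fmul pp.2).card with hEp
  have hx1 : 1 ≤ x := by
    rw [hx]; exact_mod_cast Finset.card_pos.2 hA
  have hy1 : 1 ≤ y := by
    rw [hy]; exact_mod_cast Finset.card_pos.2 hB
  have hz1 : 1 ≤ z := by
    rw [hz]; exact_mod_cast Finset.card_pos.2 hC
  have hu0 : 0 < u := by
    rw [hu]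
    exact mul_pos (mul_pos (by linarith) (by linarith)) (by linarith)
  have hN1 : 1 ≤ N := by
    rw [hN]; exact_mod_cast Fintype.card_pos
  have hN0 : 0 < N := lt_of_lt_of_le one_pos hN1
  have hQn0 : 0 < Qn := by
    rw [hQn, ← hq]
    have : (0:ℝ) < (q:ℝ) := hq0
    positivity
  have hS0 : 0 ≤ S := by rw [hS]; positivity
  -- Cauchy–Schwarz
  have hTcard : (T.card : ℝ) = u := by
    rw [hT, hu, Finset.card_product, Finset.card_product]
    push_cast
    ring
  have hcs : u ^ 2 ≤ S * Ep := by
    have hfib : T.card = ∑ d ∈ T.image fmul, (T.filter fun p => fmul p = d).card :=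
      Finset.card_eq_sum_card_fiberwise fun p hp => Finset.mem_image_of_mem fmul hp
    have h1 : (T.card : ℝ) = ∑ d ∈ T.image fmul, ((T.filter fun p => fmul p = d).card : ℝ) := by
      rw [hfib]; push_cast; rfl
    have h2 : ((T.card : ℝ)) ^ 2
        ≤ ((T.image fmul).card : ℝ) * ∑ d ∈ T.image fmul,
            ((T.filter fun p => fmul p = d).card : ℝ) ^ 2 := by
      rw [h1]
      exact sq_sum_le_card_mul_sum_sq
    have h3 : ∑ d ∈ T.image fmul, ((T.filter fun p => fmul p = d).card : ℝ) ^ 2 = (Ep : ℝ) := by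
      rw [hEp, energy_fiber_eq T fmul]
      push_cast
      rfl
    rw [← hTcard, hS, hT]
    rw [h3] at h2
    exact h2
  -- energy bound
  have henergy : N * (Ep : ℝ) * Qn ≤ u ^ 2 * Qn + u * N ^ 3 := by
    have := energy_bound A B C
    rw [← hT, ← hEp, ← hN, ← hQn, ← hx, ← hy, ← hz, ← hu] at this
    exact this
  -- main inequality
  have hmain : u * N * Qn ≤ S * (u * Qn + N ^ 3) := by
    have h : u ^ 2 * (N * Qn) ≤ (S * (u * Qn + N ^ 3)) * u := by
      calc u ^ 2 * (N * Qn) ≤ (S * Ep) * (N * Qn) :=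
            mul_le_mul_of_nonneg_right hcs (by positivity)
        _ = S * (N * Ep * Qn) := by ring
        _ ≤ S * (u ^ 2 * Qn + u * N ^ 3) := mul_le_mul_of_nonneg_left henergy hS0
        _ = (S * (u * Qn + N ^ 3)) * u := by ring
    have h2 : (u * N * Qn) * u ≤ (S * (u * Qn + N ^ 3)) * u := by
      calc (u * N * Qn) * u = u ^ 2 * (N * Qn) := by ring
        _ ≤ _ := h
    exact le_of_mul_le_mul_right h2 hu0
  -- case analysis : min N (u*Qn/N^2) ≤ 2*S
  have hmin2S : min N (u * Qn / N ^ 2) ≤ 2 * S := by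
    rcases le_total (u * Qn) (N ^ 3) with hcase | hcase
    · refine le_trans (min_le_right _ _) ?_
      rw [div_le_iff₀ (by positivity)]
      have h1 : (u * Qn) * N ≤ (2 * S * N ^ 2) * N := by
        calc (u * Qn) * N = u * N * Qn := by ring
          _ ≤ S * (u * Qn + N ^ 3) := hmain
          _ ≤ S * (N ^ 3 + N ^ 3) := by
              apply mul_le_mul_of_nonneg_left _ hS0
              exact add_le_add_left hcase _
          _ = (2 * S * N ^ 2) * N := by ring
      exact le_of_mul_le_mul_right h1 hN0
    · refine le_trans (min_le_left _ _) ?_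
      have huQ : 0 < u * Qn := by positivity
      have h1 : N * (u * Qn) ≤ (2 * S) * (u * Qn) := by
        calc N * (u * Qn) = u * N * Qn := by ring
          _ ≤ S * (u * Qn + N ^ 3) := hmain
          _ ≤ S * (u * Qn + u * Qn) := by
              apply mul_le_mul_of_nonneg_left _ hS0
              exact add_le_add_right hcase _
          _ = (2 * S) * (u * Qn) := by ring
      exact le_of_mul_le_mul_right h1 huQ
  -- identify N with q ^ (r n²)
  have hNq : N = (q : ℝ) ^ (r * n ^ 2) := by
    rw [hN]
    have h1 : Fintype.card (Matrix (Fin n) (Fin n) R) = Fintype.card R ^ (n * n) := by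
      rw [Fintype.card_congr (Matrix.of (m := Fin n) (n := Fin n) (α := R) : (Fin n → Fin n → R) ≃ _).symm]
      rw [Fintype.card_fun, Fintype.card_fun, Fintype.card_fin, ← pow_mul]
    have h2 : Fintype.card R = q ^ r := by
      rw [← Nat.card_eq_fintype_card, hr]
    rw [h1, h2, ← pow_mul]
    push_cast
    congr 1
    ring
  -- compare denominators via rpow
  have hkey : u / (q : ℝ) ^ (2 * (r : ℝ) * (n : ℝ) ^ 2 - ((n : ℝ) + 1) / 2)
      ≤ u * Qn / N ^ 2 := by
    have hQnq : Qn = (q : ℝ) ^ (n : ℕ) := by rw [hQn, hq]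
    have hNr : N = (q : ℝ) ^ ((r * n ^ 2 : ℕ) : ℝ) := by
      rw [hNq, Real.rpow_natCast]
    have hQr : Qn = (q : ℝ) ^ ((n : ℕ) : ℝ) := by rw [hQnq, Real.rpow_natCast]
    have hd1 : (0:ℝ) < (q : ℝ) ^ (2 * (r : ℝ) * (n : ℝ) ^ 2 - ((n : ℝ) + 1) / 2) :=
      Real.rpow_pos_of_pos hq0 _
    have hd2 : (0:ℝ) < N ^ 2 := by positivity
    rw [div_le_div_iff₀ hd1 hd2]
    have hexp : N ^ 2 ≤ Qn * (q : ℝ) ^ (2 * (r : ℝ) * (n : ℝ) ^ 2 - ((n : ℝ) + 1) / 2) := by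
      rw [hNr, hQr, ← Real.rpow_natCast ((q:ℝ) ^ (((r * n ^ 2 : ℕ)):ℝ)) 2]
      rw [← Real.rpow_mul (le_of_lt hq0), ← Real.rpow_add hq0]
      apply Real.rpow_le_rpow_of_exponent_le hq1
      push_cast
      have hn1 : (1:ℝ) ≤ (n:ℝ) := by exact_mod_cast hn
      nlinarith
    calc u * N ^ 2 ≤ u * (Qn * (q : ℝ) ^ (2 * (r : ℝ) * (n : ℝ) ^ 2 - ((n : ℝ) + 1) / 2)) :=
          mul_le_mul_of_nonneg_left hexp (le_of_lt hu0)
      _ = u * Qn * (q : ℝ) ^ (2 * (r : ℝ) * (n : ℝ) ^ 2 - ((n : ℝ) + 1) / 2) := by ring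
  -- finish
  have hfinal : min ((q : ℝ) ^ (r * n ^ 2))
      (u / (q : ℝ) ^ (2 * (r : ℝ) * (n : ℝ) ^ 2 - ((n : ℝ) + 1) / 2)) ≤ 2 * S := by
    refine le_trans ?_ hmin2S
    rw [← hNq]
    exact min_le_min (le_refl N) hkey
  rw [ge_iff_le, hu] at *
  calc (1/2 : ℝ) * min ((q : ℝ) ^ (r * n ^ 2))
        ((x * y * z) / (q : ℝ) ^ (2 * (r : ℝ) * (n : ℝ) ^ 2 - ((n : ℝ) + 1) / 2))
      ≤ (1/2 : ℝ) * (2 * S) := by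
        apply mul_le_mul_of_nonneg_left _ (by norm_num)
        exact hfinal
    _ = S := by ring

end KeyIndex

/-- For every `n` there is `c = C(n) > 0` such that for all subsets `A, B, C` of
`M_n(R)` over a finite chain ring `R` (residue field of size `q`, `|R| = q^r`),
`|A + BC| ≥ C(n) · min(q^{rn²}, |A||B||C|/q^{2rn²−(n+1)/2})`. -/
theorem expander_x_add_yz_finite_chain_ring (n : ℕ) :
    ∃ c : ℝ, 0 < c ∧
      ∀ (R : Type) [CommRing R] [Fintype R] [IsLocalRing R] [IsPrincipalIdealRing R]
        [DecidableEq R] (q r : ℕ),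
        q = Nat.card (IsLocalRing.ResidueField R) → Nat.card R = q ^ r →
        ∀ A B C : Finset (Matrix (Fin n) (Fin n) R),
          ((((A ×ˢ B ×ˢ C).image fun p => p.1 + p.2.1 * p.2.2).card : ℝ))
            ≥ c * min ((q : ℝ) ^ (r * n ^ 2))
                ((A.card * B.card * C.card : ℝ)
                  / (q : ℝ) ^ (2 * (r : ℝ) * (n : ℝ) ^ 2 - ((n : ℝ) + 1) / 2)) := by
  classical
  refine ⟨1/2, by norm_num, ?_⟩
  intro R _ _ _ _ _ q r hq hr A B C
  have hq2 : 2 ≤ q := by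
    have hfinRF : Finite (IsLocalRing.ResidueField R) :=
      Finite.of_surjective _ Ideal.Quotient.mk_surjective
    letI : Fintype (IsLocalRing.ResidueField R) := Fintype.ofFinite _
    rw [hq, Nat.card_eq_fintype_card]
    exact Fintype.one_lt_card_iff_nontrivial.2 inferInstance
  have hq0 : (0:ℝ) < (q:ℝ) := by
    have : (0:ℕ) < q := by omega
    exact_mod_cast this
  by_cases hne : A.Nonempty ∧ B.Nonempty ∧ C.Nonempty
  · obtain ⟨hA, hB, hC⟩ := hne
    rcases Nat.eq_zero_or_pos n with hn0 | hn
    · subst hn0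
      have hS1 : (1:ℝ) ≤ (((A ×ˢ B ×ˢ C).image fun p => p.1 + p.2.1 * p.2.2).card : ℝ) := by
        have himg : ((A ×ˢ B ×ˢ C).image fun p => p.1 + p.2.1 * p.2.2).Nonempty :=
          Finset.Nonempty.image (hA.product (hB.product hC)) _
        exact_mod_cast Finset.card_pos.2 himg
      rw [ge_iff_le]
      calc (1/2 : ℝ) * min ((q : ℝ) ^ (r * 0 ^ 2))
            ((A.card * B.card * C.card : ℝ)
              / (q : ℝ) ^ (2 * (r : ℝ) * (0 : ℕ) ^ 2 - (((0:ℕ) : ℝ) + 1) / 2))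
          ≤ (1/2 : ℝ) * ((q : ℝ) ^ (r * 0 ^ 2)) := by
            apply mul_le_mul_of_nonneg_left (min_le_left _ _) (by norm_num)
        _ = 1/2 := by norm_num
        _ ≤ _ := by linarith
    · exact main_case hn q r hq hr A B C hA hB hC
  · have hzero : ((A.card : ℝ)) * B.card * C.card = 0 := by
      rcases not_and_or.1 hne with h | h
      · rw [Finset.not_nonempty_iff_eq_empty.1 h]
        simp
      rcases not_and_or.1 h with h2 | h2
      · rw [Finset.not_nonempty_iff_eq_empty.1 h2]
        simp
      · rw [Finset.not_nonempty_iff_eq_empty.1 h2]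
        simp
    rw [ge_iff_le, hzero, zero_div]
    rw [min_eq_right (by positivity)]
    simp
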